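/- Let X ∈ ℝ^{m×n} have rank r ≤ d, and let p, p1, p2 > 0 satisfy 1/p = 1/p1 + 1/p2. Then there exist U ∈ ℝ^{m×d} and V ∈ ℝ^{n×d} with X = U·Vᵀ such that (1/p)·‖X‖_{S_p}^p = (1/p1)·‖U‖_{S_{p1}}^{p1} + (1/p2)·‖V‖_{S_{p2}}^{p2}, where ‖A‖_{S_q}^q denotes the sum of the q-th powers of the singular values of A. -/

import Mathlib

open Matrix

/-- Singular values of a real matrix (indexed by columns, unordered):
square roots of the eigenvalues of `Aᴴ * A`. -/
noncomputable def svals {a b : ℕ} (A : Matrix (Fin a) (Fin b) ℝ) : Fin b → ℝ :=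
  fun i => Real.sqrt ((Matrix.isHermitian_conjTranspose_mul_self A).eigenvalues i)

/-- Sum of the `q`-th powers of the singular values of `A`
(i.e. `‖A‖_{S_q}^q`, the `q`-th power of the Schatten-`q` (quasi-)norm). -/
noncomputable def schattenPow {a b : ℕ} (q : ℝ) (A : Matrix (Fin a) (Fin b) ℝ) : ℝ :=
  ∑ i, svals A i ^ q

open Polynomial Finset

lemma real_conjT {a b : ℕ} (A : Matrix (Fin a) (Fin b) ℝ) : Aᴴ = Aᵀ := by
  ext i j; simp [Matrix.conjTranspose_apply]

lemma charpoly_conj_aux {k : ℕ} (Q B R : Matrix (Fin k) (Fin k) ℝ)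
    (h1 : Q * R = 1) (h2 : R * Q = 1) : (Q * B * R).charpoly = B.charpoly := by
  have key : charmatrix (Q * B * R) =
      (C : ℝ →+* ℝ[X]).mapMatrix Q * charmatrix B * (C : ℝ →+* ℝ[X]).mapMatrix R := by
    unfold charmatrix
    rw [mul_sub, sub_mul, _root_.map_mul, _root_.map_mul]
    congr 1
    rw [mul_assoc, scalar_commute (X : ℝ[X]) (fun r => Commute.all _ _) _, ← mul_assoc,
      ← _root_.map_mul, h1, _root_.map_one, one_mul]
  rw [Matrix.charpoly, Matrix.charpoly, key, det_mul, det_mul, mul_comm, ← mul_assoc,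
    ← det_mul, ← _root_.map_mul C.mapMatrix R Q, h2, _root_.map_one, det_one, one_mul]

lemma diag_charpoly {k : ℕ} (ν : Fin k → ℝ) :
    (Matrix.diagonal ν).charpoly = ∏ i, (X - C (ν i)) := by
  rw [Matrix.charpoly_of_upperTriangular _ (Matrix.blockTriangular_diagonal ν)]
  simp

lemma sum_f_eigenvalues_of_eq_diagonal {k : ℕ} (f : ℝ → ℝ) (A : Matrix (Fin k) (Fin k) ℝ)
    (hA : A.IsHermitian) (μ : Fin k → ℝ) (hd : A = Matrix.diagonal μ) :
    ∑ i, f (hA.eigenvalues i) = ∑ i, f (μ i) := by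
  classical
  have hs := hA.spectral_theorem
  set Q : Matrix (Fin k) (Fin k) ℝ := (hA.eigenvectorUnitary : Matrix (Fin k) (Fin k) ℝ) with hQdef
  have hQmem := hA.eigenvectorUnitary.2
  have hQ1 : Q * star Q = 1 := (Matrix.mem_unitaryGroup_iff).mp hQmem
  have hQ2 : star Q * Q = 1 := (Matrix.mem_unitaryGroup_iff').mp hQmem
  have hs' : A = Q * Matrix.diagonal hA.eigenvalues * star Q := by
    rw [Unitary.conjStarAlgAut_apply] at hs
    exact hs
  have hch : (Matrix.diagonal μ).charpoly = (Matrix.diagonal hA.eigenvalues).charpoly := by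
    rw [← hd]
    conv_lhs => rw [hs']
    exact charpoly_conj_aux Q _ (star Q) hQ1 hQ2
  have hmul : (Finset.univ.val.map μ) = (Finset.univ.val.map hA.eigenvalues) := by
    have e1 : ∀ ν : Fin k → ℝ,
        (Multiset.map (fun a : ℝ => X - C a) (Finset.univ.val.map ν)).prod
          = ∏ i, (X - C (ν i)) := by
      intro ν; rw [Multiset.map_map]; rfl
    have h1 := Polynomial.roots_multiset_prod_X_sub_C (Finset.univ.val.map μ)
    have h2 := Polynomial.roots_multiset_prod_X_sub_C (Finset.univ.val.map hA.eigenvalues)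
    rw [e1] at h1 h2
    rw [← h1, ← h2, ← diag_charpoly μ, ← diag_charpoly hA.eigenvalues, hch]
  calc ∑ i, f (hA.eigenvalues i) = ((Finset.univ.val.map hA.eigenvalues).map f).sum := by
        rw [Multiset.map_map]; rfl
    _ = ((Finset.univ.val.map μ).map f).sum := by rw [hmul]
    _ = ∑ i, f (μ i) := by rw [Multiset.map_map]; rfl

lemma sum_g_emb {α : Type*} [Fintype α] {d' : ℕ} (e : α ↪ Fin d') (t : α → ℝ)
    (g : ℝ → ℝ) (hg : g 0 = 0) :
    ∑ j : Fin d', g (∑ i : α, if e i = j then t i else 0) = ∑ i : α, g (t i) := by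
  classical
  have key : ∀ j, g (∑ i, if e i = j then t i else 0)
      = ∑ i, if e i = j then g (t i) else 0 := by
    intro j
    by_cases h : ∃ i, e i = j
    · obtain ⟨i0, rfl⟩ := h
      have hcond : ∀ i, (e i = e i0) ↔ i = i0 := fun i => e.injective.eq_iff
      simp only [hcond]
      rw [Finset.sum_ite_eq' Finset.univ i0 t,
        Finset.sum_ite_eq' Finset.univ i0 (fun i => g (t i))]
      simp
    · push_neg at h
      have h1 : (∑ i, if e i = j then t i else 0) = 0 :=
        Finset.sum_eq_zero fun i _ => by simp [h i]
      have h2 : (∑ i, if e i = j then g (t i) else 0) = 0 :=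
        Finset.sum_eq_zero fun i _ => by simp [h i]
      rw [h1, h2, hg]
  calc ∑ j : Fin d', g (∑ i : α, if e i = j then t i else 0)
      = ∑ j : Fin d', ∑ i, if e i = j then g (t i) else 0 :=
        Finset.sum_congr rfl fun j _ => key j
    _ = ∑ i, ∑ j : Fin d', if e i = j then g (t i) else 0 := Finset.sum_comm
    _ = ∑ i : α, g (t i) := by simp

lemma sum_restrict {n' : ℕ} (lam : Fin n' → ℝ) [DecidablePred fun i => lam i ≠ 0]
    (g : Fin n' → ℝ) (hg : ∀ i, lam i = 0 → g i = 0) :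
    ∑ i, g i = ∑ i : {i // lam i ≠ 0}, g i.1 := by
  classical
  rw [← Finset.sum_filter_add_sum_filter_not Finset.univ (fun i => lam i ≠ 0) g]
  have h2 : ∑ i ∈ Finset.univ.filter (fun i => ¬ lam i ≠ 0), g i = 0 := by
    apply Finset.sum_eq_zero
    intro i hi
    simp only [Finset.mem_filter, not_not] at hi
    exact hg i hi.2
  rw [h2, add_zero]
  exact Finset.sum_subtype (Finset.univ.filter fun i => lam i ≠ 0) (by simp) g

lemma conj_diag_of_emb {n' d' : ℕ} (lam : Fin n' → ℝ) [DecidablePred fun i => lam i ≠ 0]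
    (e : {i // lam i ≠ 0} ↪ Fin d')
    (F : Matrix (Fin n') (Fin d') ℝ) (c w : Fin n' → ℝ)
    (hF0 : ∀ i j, lam i = 0 → F i j = 0)
    (hF1 : ∀ (i : {i // lam i ≠ 0}) (j : Fin d'), F i.1 j = if e i = j then c i.1 else 0) :
    Fᵀ * Matrix.diagonal w * F =
      Matrix.diagonal (fun j => ∑ i : {i // lam i ≠ 0},
        if e i = j then w i.1 * (c i.1 * c i.1) else 0) := by
  classical
  ext j k
  rw [Matrix.mul_assoc, Matrix.mul_apply]
  simp only [Matrix.transpose_apply, Matrix.diagonal_mul]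
  by_cases hjk : j = k
  · subst hjk
    rw [Matrix.diagonal_apply_eq]
    rw [sum_restrict lam (fun i => F i j * (w i * F i j))
      (fun i h => by show F i j * (w i * F i j) = 0; rw [hF0 i j h]; ring)]
    apply Finset.sum_congr rfl
    intro i _
    rw [hF1 i j]
    by_cases he : e i = j <;> simp [he] <;> ring
  · rw [Matrix.diagonal_apply_ne _ hjk]
    apply Finset.sum_eq_zero
    intro i _
    by_cases h0 : lam i = 0
    · rw [hF0 i j h0]; ring
    · rw [hF1 ⟨i, h0⟩ j, hF1 ⟨i, h0⟩ k]
      by_cases hej : e ⟨i, h0⟩ = j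
      · have hnk : e ⟨i, h0⟩ ≠ k := by rw [hej]; exact hjk
        simp [hej, hnk, hjk]
      · simp [hej]

lemma sum_ite_ite {β : Type*} [Fintype β] [DecidableEq β] (j1 j2 : β) (a b : ℝ) :
    ∑ j : β, (if j1 = j then a else 0) * (if j2 = j then b else 0)
      = if j1 = j2 then a * b else 0 := by
  by_cases h : j1 = j2
  · subst h
    rw [if_pos rfl]
    have : ∀ j : β, (if j1 = j then a else 0) * (if j1 = j then b else 0)
        = if j1 = j then a * b else 0 := by
      intro j; by_cases hj : j1 = j <;> simp [hj]
    rw [Finset.sum_congr rfl fun j _ => this j]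
    simp
  · rw [if_neg h]
    apply Finset.sum_eq_zero
    intro j _
    by_cases h1 : j1 = j
    · have h2 : j2 ≠ j := fun hc => h (h1.trans hc.symm)
      simp [h2]
    · simp [h1]

lemma schattenPow_of_diag {a b : ℕ} (q : ℝ) (A : Matrix (Fin a) (Fin b) ℝ) (μ : Fin b → ℝ)
    (h : Aᵀ * A = Matrix.diagonal μ) :
    schattenPow q A = ∑ j, Real.sqrt (μ j) ^ q := by
  unfold schattenPow svals
  exact sum_f_eigenvalues_of_eq_diagonal (fun x => Real.sqrt x ^ q) (Aᴴ * A) _ μ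
    (by rw [real_conjT]; exact h)

theorem bi_schatten_exists_factorization (m n d : ℕ) (p p1 p2 : ℝ)
    (hp : 0 < p) (hp1 : 0 < p1) (hp2 : 0 < p2) (hsum : 1 / p = 1 / p1 + 1 / p2)
    (X : Matrix (Fin m) (Fin n) ℝ) (hrank : X.rank ≤ d) :
    ∃ (U : Matrix (Fin m) (Fin d) ℝ) (V : Matrix (Fin n) (Fin d) ℝ),
      X = U * Vᵀ ∧
        (1 / p) * schattenPow p X =
          (1 / p1) * schattenPow p1 U + (1 / p2) * schattenPow p2 V := by
  classical
  set hH := Matrix.isHermitian_conjTranspose_mul_self X with hHdef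
  set lam : Fin n → ℝ := hH.eigenvalues with hlamdef
  have hlam : ∀ i, 0 ≤ lam i := fun i =>
    Matrix.eigenvalues_conjTranspose_mul_self_nonneg X i
  set σ : Fin n → ℝ := fun i => Real.sqrt (lam i) with hσdef
  have hσpos : ∀ i, lam i ≠ 0 → 0 < σ i := fun i h => by
    rw [hσdef]; exact Real.sqrt_pos.mpr (lt_of_le_of_ne (hlam i) (Ne.symm h))
  have hσnn : ∀ i, 0 ≤ σ i := fun i => by rw [hσdef]; exact Real.sqrt_nonneg _
  have hmulself : ∀ i, σ i * σ i = lam i := fun i => by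
    rw [hσdef]; exact Real.mul_self_sqrt (hlam i)
  set Q : Matrix (Fin n) (Fin n) ℝ := (hH.eigenvectorUnitary : Matrix (Fin n) (Fin n) ℝ)
    with hQdef
  have hQmem := hH.eigenvectorUnitary.2
  have hstarQ : star Q = Qᵀ := by
    ext i j; simp [Matrix.star_apply]
  have hQ1 : Q * Qᵀ = 1 := by
    have h := (Matrix.mem_unitaryGroup_iff).mp hQmem
    rwa [← hQdef, hstarQ] at h
  have hQ2 : Qᵀ * Q = 1 := by
    have h := (Matrix.mem_unitaryGroup_iff').mp hQmem
    rwa [← hQdef, hstarQ] at h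
  have hspec : Xᴴ * X = Q * Matrix.diagonal lam * Qᵀ := by
    have hs := hH.spectral_theorem
    have hs' : Xᴴ * X = Q * Matrix.diagonal lam * star Q := by
        rw [Unitary.conjStarAlgAut_apply] at hs
        exact hs
    rwa [hstarQ] at hs'
  set W : Matrix (Fin m) (Fin n) ℝ := X * Q with hWdef
  have hWW : Wᵀ * W = Matrix.diagonal lam := by
    have h : Wᵀ * W = Qᵀ * (Xᴴ * X) * Q := by
      rw [hWdef, Matrix.transpose_mul, real_conjT X]
      simp only [Matrix.mul_assoc]
    rw [h, hspec,
      show Qᵀ * (Q * Matrix.diagonal lam * Qᵀ) * Q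
        = Qᵀ * Q * Matrix.diagonal lam * (Qᵀ * Q) by simp only [Matrix.mul_assoc],
      hQ2, Matrix.one_mul, Matrix.mul_one]
  have hWcol : ∀ i, lam i = 0 → ∀ a, W a i = 0 := by
    intro i h0 a
    have hd : (Wᵀ * W) i i = 0 := by rw [hWW, Matrix.diagonal_apply_eq, h0]
    rw [Matrix.mul_apply] at hd
    simp only [Matrix.transpose_apply] at hd
    have hnn : ∀ j ∈ Finset.univ, (0:ℝ) ≤ W j i * W j i := fun j _ => mul_self_nonneg _
    exact mul_self_eq_zero.mp ((Finset.sum_eq_zero_iff_of_nonneg hnn).mp hd a (Finset.mem_univ a))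
  have h1 : p / p1 + p / p2 = 1 := by
    have h := congrArg (fun x => p * x) hsum
    simp only [mul_add, mul_one_div] at h
    rw [div_self hp.ne'] at h
    exact h.symm
  set c1 : ℝ := p / p1 - 1 with hc1def
  set c2 : ℝ := p / p2 with hc2def
  have hc12 : c1 + c2 = 0 := by rw [hc1def, hc2def]; linarith
  have hcard : Fintype.card {i // lam i ≠ 0} ≤ Fintype.card (Fin d) := by
    rw [Fintype.card_fin]
    calc Fintype.card {i // lam i ≠ 0} = (Xᴴ * X).rank := (hH.rank_eq_card_non_zero_eigs).symm
      _ = (Xᵀ * X).rank := by rw [real_conjT]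
      _ = X.rank := Matrix.rank_transpose_mul_self X
      _ ≤ d := hrank
  obtain ⟨e⟩ := Function.Embedding.nonempty_of_card_le hcard
  set F1 : Matrix (Fin n) (Fin d) ℝ :=
    fun i j => if h : lam i ≠ 0 then (if e ⟨i, h⟩ = j then σ i ^ c1 else 0) else 0 with hF1def
  set F2 : Matrix (Fin n) (Fin d) ℝ :=
    fun i j => if h : lam i ≠ 0 then (if e ⟨i, h⟩ = j then σ i ^ c2 else 0) else 0 with hF2def
  have hF10 : ∀ i j, lam i = 0 → F1 i j = 0 := fun i j h => by simp [hF1def, h]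
  have hF11 : ∀ (i : {i // lam i ≠ 0}) (j : Fin d),
      F1 i.1 j = if e i = j then σ i.1 ^ c1 else 0 := fun i j => by
    simp [hF1def, i.2]
  have hF20 : ∀ i j, lam i = 0 → F2 i j = 0 := fun i j h => by simp [hF2def, h]
  have hF21 : ∀ (i : {i // lam i ≠ 0}) (j : Fin d),
      F2 i.1 j = if e i = j then σ i.1 ^ c2 else 0 := fun i j => by
    simp [hF2def, i.2]
  refine ⟨W * F1, Q * F2, ?_, ?_⟩
  · -- X = (W * F1) * (Q * F2)ᵀ
    have hF12 : F1 * F2ᵀ = Matrix.diagonal (fun i => if lam i ≠ 0 then (1:ℝ) else 0) := by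
      ext i i'
      rw [Matrix.mul_apply]
      simp only [Matrix.transpose_apply, Matrix.diagonal_apply]
      by_cases h : lam i ≠ 0
      · by_cases h' : lam i' ≠ 0
        · simp only [hF1def, hF2def, dif_pos h, dif_pos h']
          rw [sum_ite_ite]
          by_cases hii : i = i'
          · subst hii
            simp only [if_pos rfl, if_pos (rfl : i = i), h, if_true]
            rw [← Real.rpow_add (hσpos i h), hc12, Real.rpow_zero]
            simp [h]
          · have hne : e ⟨i, h⟩ ≠ e ⟨i', h'⟩ := fun hc => hii (congrArg Subtype.val (e.injective hc))
            simp [hne, hii]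
        · have hii : i ≠ i' := fun hc => h' (hc ▸ h)
          simp only [hF2def, dif_neg h']
          simp [hii]
      · by_cases hii : i = i'
        · subst hii
          simp only [hF1def, dif_neg h]
          simp [h]
        · simp only [hF1def, dif_neg h]
          simp [hii]
    have hWJ : W * Matrix.diagonal (fun i => if lam i ≠ 0 then (1:ℝ) else 0) = W := by
      ext a i
      rw [Matrix.mul_diagonal]
      by_cases h : lam i = 0
      · rw [hWcol i h a]; simp
      · simp [h]
    rw [Matrix.transpose_mul,
      show W * F1 * (F2ᵀ * Qᵀ) = W * (F1 * F2ᵀ) * Qᵀ by simp only [Matrix.mul_assoc],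
      hF12, hWJ, hWdef, Matrix.mul_assoc, hQ1, Matrix.mul_one]
  · -- the Schatten identity
    have hUU : (W * F1)ᵀ * (W * F1) = Matrix.diagonal (fun j => ∑ i : {i // lam i ≠ 0},
        if e i = j then lam i.1 * (σ i.1 ^ c1 * σ i.1 ^ c1) else 0) := by
      calc (W * F1)ᵀ * (W * F1) = F1ᵀ * (Wᵀ * W) * F1 := by
            rw [Matrix.transpose_mul]; simp only [Matrix.mul_assoc]
        _ = F1ᵀ * Matrix.diagonal lam * F1 := by rw [hWW]
        _ = _ := conj_diag_of_emb lam e F1 (fun i => σ i ^ c1) lam hF10 hF11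
    have hVV : (Q * F2)ᵀ * (Q * F2) = Matrix.diagonal (fun j => ∑ i : {i // lam i ≠ 0},
        if e i = j then (1:ℝ) * (σ i.1 ^ c2 * σ i.1 ^ c2) else 0) := by
      calc (Q * F2)ᵀ * (Q * F2) = F2ᵀ * (Qᵀ * Q) * F2 := by
            rw [Matrix.transpose_mul]; simp only [Matrix.mul_assoc]
        _ = F2ᵀ * Matrix.diagonal (fun _ : Fin n => (1:ℝ)) * F2 := by rw [hQ2, Matrix.diagonal_one]
        _ = _ := conj_diag_of_emb lam e F2 (fun i => σ i ^ c2) (fun _ => 1) hF20 hF21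
    have hg1 : Real.sqrt 0 ^ p1 = 0 := by rw [Real.sqrt_zero, Real.zero_rpow hp1.ne']
    have hg2 : Real.sqrt 0 ^ p2 = 0 := by rw [Real.sqrt_zero, Real.zero_rpow hp2.ne']
    have hsU : schattenPow p1 (W * F1) = ∑ i : {i // lam i ≠ 0}, σ i.1 ^ p := by
      rw [schattenPow_of_diag p1 _ _ hUU,
        sum_g_emb e (fun i => lam i.1 * (σ i.1 ^ c1 * σ i.1 ^ c1)) (fun x => Real.sqrt x ^ p1) hg1]
      apply Finset.sum_congr rfl
      intro i _
      have hσi := hσpos i.1 i.2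
      have e1 : lam i.1 * (σ i.1 ^ c1 * σ i.1 ^ c1)
          = (σ i.1 ^ (p / p1)) * (σ i.1 ^ (p / p1)) := by
        rw [← hmulself i.1, show p / p1 = 1 + c1 by rw [hc1def]; ring,
          Real.rpow_add hσi, Real.rpow_one]
        ring
      rw [e1, Real.sqrt_mul_self (Real.rpow_nonneg (hσnn i.1) _),
        ← Real.rpow_mul (hσnn i.1), div_mul_cancel₀ p hp1.ne']
    have hsV : schattenPow p2 (Q * F2) = ∑ i : {i // lam i ≠ 0}, σ i.1 ^ p := by
      rw [schattenPow_of_diag p2 _ _ hVV,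
        sum_g_emb e (fun i => (1:ℝ) * (σ i.1 ^ c2 * σ i.1 ^ c2)) (fun x => Real.sqrt x ^ p2) hg2]
      apply Finset.sum_congr rfl
      intro i _
      have e1 : (1:ℝ) * (σ i.1 ^ c2 * σ i.1 ^ c2)
          = (σ i.1 ^ (p / p2)) * (σ i.1 ^ (p / p2)) := by
        rw [hc2def]; ring
      rw [e1, Real.sqrt_mul_self (Real.rpow_nonneg (hσnn i.1) _),
        ← Real.rpow_mul (hσnn i.1), div_mul_cancel₀ p hp2.ne']
    have hsX : schattenPow p X = ∑ i : {i // lam i ≠ 0}, σ i.1 ^ p := by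
      have h0 : schattenPow p X = ∑ i, σ i ^ p := by
        unfold schattenPow svals
        simp only [hσdef, hlamdef, hHdef]
      rw [h0]
      apply sum_restrict lam (fun i => σ i ^ p)
      intro i h
      have : σ i = 0 := by rw [hσdef]; simp [h]
      rw [this, Real.zero_rpow hp.ne']
    rw [hsU, hsV, hsX, hsum]
    ring
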